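/- In the finite-horizon multilateral stopping game of a Markov chain, define recursively v_{i,0} = f_i and, for n = 1,…,N, v_{i,n}(x) = ∫_E [ (f_i(y) − v_{i,n−1}(y))^+ · u_n^i(y) − (f_i(y) − v_{i,n−1}(y))^− · l_n^i(y) + v_{i,n−1}(y) ] K(x,dy), where C_{j,n} = {y ∈ E : f_j(y) − v_{j,n−1}(y) ≥ 0}, u_n^i(y) = π applied to the vector whose j-th coordinate is 1_{C_{j,n}}(y) for j ≠ i and whose i-th coordinate is 1, and l_n^i(y) is the same with i-th coordinate 0. Then the stopping strategy σ* in which player i declares σ*_n{}^i = 1 exactly when X_n ∈ C*_n{}^i = {x ∈ E : f_i(x) − v_{i,N−n}(x) ≥ 0} is an equilibrium with respect to π, and for every player i and every initial state x, E_x f_i(X_{t_π(σ*)}) = v_{i,N}(x). -/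

import Mathlib

open MeasureTheory ProbabilityTheory
open Filter

noncomputable section

/-- The natural filtration `F_n = σ(X_0,…,X_n)` of a process `X`. -/
def natFilt {Ω E : Type*} [MeasurableSpace E] (X : ℕ → Ω → E) (n : ℕ) :
    MeasurableSpace Ω :=
  ⨆ k ∈ Set.Iic n, MeasurableSpace.comap (X k) inferInstance

/-- An individual stopping strategy for the finite-horizon game: `σ_n^i` is
`F_n`-measurable for `1 ≤ n ≤ N`, and at the horizon the player must declare to stop. -/
def IsISS {Ω E : Type*} [MeasurableSpace E] (X : ℕ → Ω → E) (N : ℕ)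
    (σi : ℕ → Ω → Bool) : Prop :=
  (∀ n, 1 ≤ n → n ≤ N → Measurable[natFilt X n] (σi n)) ∧ ∀ ω, σi N ω = true

/-- The stopping time `t_π(σ) = inf {1 ≤ n ≤ N : π(σ_n^1,…,σ_n^p) = 1}` generated by a
stopping strategy `σ` and the aggregate function `π` in the `N`-horizon game. -/
def stopT {Ω : Type*} {p : ℕ} (π : (Fin p → Bool) → Bool) (N : ℕ)
    (σ : Fin p → ℕ → Ω → Bool) (ω : Ω) : ℕ :=
  sInf {n : ℕ | 1 ≤ n ∧ n ≤ N ∧ π (fun i => σ i n ω) = true}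

/-- The value recursion of the finite-horizon multilateral stopping game:
`v_{i,0} = f_i` and
`v_{i,n}(x) = ∫ [(f_i - v_{i,n-1})⁺ · u_n^i - (f_i - v_{i,n-1})⁻ · l_n^i + v_{i,n-1}] dK(x,·)`,
where `u_n^i(y)` (resp. `l_n^i(y)`) is `π` evaluated at the vector whose `j`-th
coordinate is `1_{C_{j,n}}(y)` for `j ≠ i`, with `1` (resp. `0`) in slot `i`, and
`C_{j,n} = {y : f_j(y) - v_{j,n-1}(y) ≥ 0}`. -/
def gameValue {E : Type*} [MeasurableSpace E] (K : Kernel E E) {p : ℕ}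
    (f : Fin p → E → ℝ) (π : (Fin p → Bool) → Bool) : ℕ → Fin p → E → ℝ
  | 0 => f
  | n + 1 => fun i x =>
      ∫ y,
        (max (f i y - gameValue K f π n i y) 0 *
            (if π (Function.update
                (fun j => decide (0 ≤ f j y - gameValue K f π n j y)) i true)
              then (1 : ℝ) else 0) -
          max (-(f i y - gameValue K f π n i y)) 0 *
            (if π (Function.update
                (fun j => decide (0 ≤ f j y - gameValue K f π n j y)) i false)
              then (1 : ℝ) else 0) +
          gameValue K f π n i y) ∂(K x)

/-! ### Auxiliary material -/

set_option linter.unusedSectionVars false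

section Aux

lemma max_sub_max_neg (a : ℝ) : max a 0 - max (-a) 0 = a := by
  rcases le_total 0 a with h | h
  · rw [max_eq_left h, max_eq_right (neg_nonpos.mpr h), sub_zero]
  · rw [max_eq_right h, max_eq_left (neg_nonneg.mpr h), zero_sub, neg_neg]

variable {p : ℕ} (π : (Fin p → Bool) → Bool)

lemma pointwise_le (i : Fin p) (c : Fin p → Bool) (bb : Bool) (F V : ℝ)
    (hlw : π (Function.update c i false) ≤ bb) (hub : bb ≤ π (Function.update c i true)) :
    (if bb then F else V) ≤
      max (F - V) 0 * (if π (Function.update c i true) then 1 else 0) -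
        max (-(F - V)) 0 * (if π (Function.update c i false) then 1 else 0) + V := by
  cases bb <;> cases hu : π (Function.update c i true) <;>
    cases hl : π (Function.update c i false) <;> simp_all <;>
    first
    | exact absurd hlw (by decide)
    | exact absurd hub (by decide)
    | linarith [le_max_left (F - V) (0:ℝ), le_max_right (F - V) (0:ℝ),
        le_max_right (-(F - V)) (0:ℝ), le_max_left (V - F) (0:ℝ),
        le_max_right (V - F) (0:ℝ), max_sub_max_neg (F - V),
        (by rw [neg_sub] : max (-(F - V)) 0 = max (V - F) 0)]

lemma pointwise_eq (i : Fin p) (c : Fin p → Bool) (F V : ℝ)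
    (hci : c i = decide (0 ≤ F - V)) :
    (if π c then F else V) =
      max (F - V) 0 * (if π (Function.update c i true) then 1 else 0) -
        max (-(F - V)) 0 * (if π (Function.update c i false) then 1 else 0) + V := by
  rcases le_or_gt 0 (F - V) with h | h
  · have hc : Function.update c i true = c := by
      rw [Function.update_eq_self_iff, hci]; simp [h]
    rw [hc, max_eq_left h, max_eq_right (neg_nonpos.mpr h), zero_mul, sub_zero]
    cases hπc : π c <;> simp <;> linarith
  · have hc : Function.update c i false = c := by
      rw [Function.update_eq_self_iff, hci]; simp [not_le.mpr h]
    rw [hc, max_eq_right h.le, max_eq_left (neg_nonneg.mpr h.le), zero_mul, zero_sub]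
    cases hπc : π c <;> simp <;> linarith

end Aux

/-! ### The first-stop-after-`n₀` time -/

def tA {Ω : Type*} {p : ℕ} (π : (Fin p → Bool) → Bool) (N : ℕ)
    (s : Fin p → ℕ → Ω → Bool) (n₀ : ℕ) (ω : Ω) : ℕ :=
  sInf {n : ℕ | n₀ ≤ n ∧ n ≤ N ∧ π (fun j => s j n ω) = true}

section tAfacts
variable {Ω : Type*} {p : ℕ} (π : (Fin p → Bool) → Bool) (N : ℕ)
  (s : Fin p → ℕ → Ω → Bool) (ω : Ω)

lemma tA_spec (n₀ : ℕ) (hn : n₀ ≤ N) (hωN : π (fun j => s j N ω) = true) :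
    n₀ ≤ tA π N s n₀ ω ∧ tA π N s n₀ ω ≤ N ∧
      π (fun j => s j (tA π N s n₀ ω) ω) = true :=
  Nat.sInf_mem (⟨N, hn, le_rfl, hωN⟩ :
    {n : ℕ | n₀ ≤ n ∧ n ≤ N ∧ π (fun j => s j n ω) = true}.Nonempty)

lemma tA_N (hωN : π (fun j => s j N ω) = true) : tA π N s N ω = N :=
  le_antisymm ((tA_spec π N s ω N le_rfl hωN).2.1) ((tA_spec π N s ω N le_rfl hωN).1)

lemma tA_step (n₀ : ℕ) (hn : n₀ ≤ N) (hωN : π (fun j => s j N ω) = true) :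
    tA π N s n₀ ω = if π (fun j => s j n₀ ω) = true then n₀ else tA π N s (n₀ + 1) ω := by
  split_ifs with h
  · exact le_antisymm (Nat.sInf_le ⟨le_rfl, hn, h⟩) (tA_spec π N s ω n₀ hn hωN).1
  · unfold tA
    congr 1
    ext k
    simp only [Set.mem_setOf_eq]
    constructor
    · rintro ⟨h1, h2, h3⟩
      refine ⟨?_, h2, h3⟩
      rcases eq_or_lt_of_le h1 with h4 | h4
      · subst h4; exact absurd h3 h
      · exact h4
    · rintro ⟨h1, h2, h3⟩
      exact ⟨(Nat.le_succ n₀).trans h1, h2, h3⟩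

lemma stopT_eq_tA : stopT π N s ω = tA π N s 1 ω := rfl

end tAfacts

/-! ### Filtration and measurability lemmas -/

section Meas

variable {E Ω : Type*} [MeasurableSpace E] [MeasurableSpace Ω]

lemma natFilt_le (X : ℕ → Ω → E) (hX : ∀ n, Measurable (X n)) (n : ℕ) :
    natFilt X n ≤ ‹MeasurableSpace Ω› :=
  iSup₂_le fun k _ => (hX k).comap_le

lemma natFilt_mono (X : ℕ → Ω → E) {m n : ℕ} (h : m ≤ n) : natFilt X m ≤ natFilt X n := by
  refine iSup₂_le fun k hk => ?_
  exact le_iSup₂ (f := fun k (_ : k ∈ Set.Iic n) => MeasurableSpace.comap (X k) inferInstance)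
    k (hk.trans h)

lemma measurable_X_natFilt (X : ℕ → Ω → E) {k n : ℕ} (h : k ≤ n) :
    Measurable[natFilt X n] (X k) := by
  have h2 : MeasurableSpace.comap (X k) inferInstance ≤ natFilt X n :=
    le_iSup₂ (f := fun k (_ : k ∈ Set.Iic n) => MeasurableSpace.comap (X k) inferInstance) k h
  exact fun s hs => h2 _ ⟨s, hs, rfl⟩

lemma meas_boolInd {b : E → Bool} (hb : Measurable b) :
    Measurable fun y => (if b y then (1:ℝ) else 0) :=
  Measurable.ite (hb (MeasurableSet.singleton true)) measurable_const measurable_const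

lemma meas_decide' {h : E → ℝ} (hh : Measurable h) :
    Measurable fun y => decide (0 ≤ h y) := by
  have h2 : (fun y => decide (0 ≤ h y)) = fun y => if 0 ≤ h y then true else false := by
    ext y; by_cases h0 : 0 ≤ h y <;> simp [h0]
  rw [h2]
  exact Measurable.ite (measurableSet_le measurable_const hh) measurable_const measurable_const

lemma meas_pi_bool' {p : ℕ} {c : E → Fin p → Bool} (hc : ∀ j, Measurable fun y => c y j)
    (π : (Fin p → Bool) → Bool) : Measurable fun y => π (c y) :=
  (measurable_of_finite π).comp (measurable_pi_lambda _ hc)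

lemma meas_update_bool {p : ℕ} {c : E → Fin p → Bool} (hc : ∀ j, Measurable fun y => c y j)
    (i : Fin p) (bv : Bool) (j : Fin p) :
    Measurable fun y => Function.update (c y) i bv j := by
  simp only [Function.update_apply]
  exact Measurable.ite (by by_cases h : j = i <;> simp [h, MeasurableSet.univ])
    measurable_const (hc j)

end Meas

/-! ### The one-step integrand of the value recursion -/

section Brak

variable {E : Type*} [MeasurableSpace E]

def brak (K : Kernel E E) {p : ℕ} (f : Fin p → E → ℝ) (π : (Fin p → Bool) → Bool)
    (n : ℕ) (i : Fin p) : E → ℝ := fun y =>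
  max (f i y - gameValue K f π n i y) 0 *
      (if π (Function.update
          (fun j => decide (0 ≤ f j y - gameValue K f π n j y)) i true)
        then (1 : ℝ) else 0) -
    max (-(f i y - gameValue K f π n i y)) 0 *
      (if π (Function.update
          (fun j => decide (0 ≤ f j y - gameValue K f π n j y)) i false)
        then (1 : ℝ) else 0) +
    gameValue K f π n i y

lemma gameValue_succ (K : Kernel E E) {p : ℕ} (f : Fin p → E → ℝ)
    (π : (Fin p → Bool) → Bool) (n : ℕ) (i : Fin p) (x : E) :
    gameValue K f π (n + 1) i x = ∫ y, brak K f π n i y ∂(K x) := rfl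

lemma brak_abs_le (K : Kernel E E) {p : ℕ} (f : Fin p → E → ℝ)
    (π : (Fin p → Bool) → Bool) (n : ℕ) (i : Fin p) (y : E) :
    |brak K f π n i y| ≤ 2 * |f i y| + 3 * |gameValue K f π n i y| := by
  set a := f i y - gameValue K f π n i y with ha
  set v := gameValue K f π n i y with hv
  have hav : |a| ≤ |f i y| + |v| := by
    rw [ha]; exact (abs_sub _ _)
  have hu : |(if π (Function.update
      (fun j => decide (0 ≤ f j y - gameValue K f π n j y)) i true)
        then (1 : ℝ) else 0)| ≤ 1 := by split_ifs <;> simp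
  have hl : |(if π (Function.update
      (fun j => decide (0 ≤ f j y - gameValue K f π n j y)) i false)
        then (1 : ℝ) else 0)| ≤ 1 := by split_ifs <;> simp
  have h1 : |max a 0| ≤ |a| := by
    rw [abs_of_nonneg (le_max_right a 0)]
    exact max_le (le_abs_self a) (abs_nonneg a)
  have h2 : |max (-a) 0| ≤ |a| := by
    rw [abs_of_nonneg (le_max_right (-a) 0)]
    exact max_le ((le_abs_self (-a)).trans (abs_neg a).le) (abs_nonneg a)
  calc |brak K f π n i y| ≤ |max a 0 * _| + |max (-a) 0 * _| + |v| := by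
        rw [brak]
        exact (abs_add_le _ v).trans (by gcongr; exact abs_sub _ _)
      _ ≤ |a| * 1 + |a| * 1 + |v| := by
        rw [abs_mul, abs_mul]
        gcongr
      _ ≤ 2 * |f i y| + 3 * |v| := by linarith

lemma brak_measurable (K : Kernel E E) {p : ℕ}
    (f : Fin p → E → ℝ) (hf : ∀ i, Measurable (f i)) (π : (Fin p → Bool) → Bool)
    {n : ℕ} (hgv : ∀ j, Measurable (gameValue K f π n j)) (i : Fin p) :
    Measurable (brak K f π n i) := by
  have hc : ∀ j, Measurable fun y => decide (0 ≤ f j y - gameValue K f π n j y) :=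
    fun j => meas_decide' ((hf j).sub (hgv j))
  have h1 : Measurable fun y =>
      π (Function.update (fun j => decide (0 ≤ f j y - gameValue K f π n j y)) i true) :=
    meas_pi_bool' (meas_update_bool hc i true) π
  have h2 : Measurable fun y =>
      π (Function.update (fun j => decide (0 ≤ f j y - gameValue K f π n j y)) i false) :=
    meas_pi_bool' (meas_update_bool hc i false) π
  exact ((((hf i).sub (hgv i)).max measurable_const).mul (meas_boolInd h1)).sub
    ((((hf i).sub (hgv i)).neg.max measurable_const).mul (meas_boolInd h2)) |>.add (hgv i)

lemma gameValue_measurable (K : Kernel E E) [IsMarkovKernel K] {p : ℕ}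
    (f : Fin p → E → ℝ) (hf : ∀ i, Measurable (f i)) (π : (Fin p → Bool) → Bool) :
    ∀ n i, Measurable (gameValue K f π n i) := by
  intro n
  induction n with
  | zero => exact hf
  | succ n ih =>
    intro i
    have hb : Measurable (brak K f π n i) := brak_measurable K f hf π ih i
    have hm2 : Measurable fun x => ∫ y, brak K f π n i y ∂(K x) :=
      (MeasureTheory.StronglyMeasurable.integral_kernel_prod_right (κ := K)
        (f := fun _ y => brak K f π n i y)
        ((hb.comp measurable_snd).stronglyMeasurable)).measurable
    have heq : gameValue K f π (n+1) i = fun x => ∫ y, brak K f π n i y ∂(K x) := by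
      ext x; exact gameValue_succ K f π n i x
    rw [heq]; exact hm2

lemma gameValue_one (K : Kernel E E) {p : ℕ} (f : Fin p → E → ℝ)
    (π : (Fin p → Bool) → Bool) (i : Fin p) (x : E) :
    gameValue K f π 1 i x = ∫ y, f i y ∂(K x) := by
  rw [gameValue_succ]
  congr 1
  funext y
  simp [brak, gameValue]

end Brak

section Markov
variable {E Ω : Type*} [MeasurableSpace E] [MeasurableSpace Ω]

variable (K : Kernel E E) [IsMarkovKernel K] (P : E → Measure Ω)
  [∀ x, IsProbabilityMeasure (P x)] (X : ℕ → Ω → E) (hX : ∀ n, Measurable (X n))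
  (hMarkov : ∀ (x : E) (n : ℕ) (h : E → ℝ), Measurable h → (∃ M, ∀ y, |h y| ≤ M) →
      (P x)[fun ω => h (X (n + 1) ω) | natFilt X n] =ᵐ[P x]
        fun ω => ∫ y, h y ∂(K (X n ω)))

include hX hMarkov in
lemma markov_bdd (x : E) (n : ℕ) (h : E → ℝ) (hh : Measurable h) (M : ℝ)
    (hM : ∀ y, |h y| ≤ M) :
    Integrable (fun ω => ∫ y, h y ∂(K (X n ω))) (P x) ∧
    ∀ A, MeasurableSet[natFilt X n] A →
      ∫ ω in A, h (X (n + 1) ω) ∂(P x) = ∫ ω in A, (∫ y, h y ∂(K (X n ω))) ∂(P x) := by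
  have hm := natFilt_le X hX n
  have hint : Integrable (fun ω => h (X (n + 1) ω)) (P x) := by
    refine Integrable.mono' (integrable_const M) ((hh.comp (hX (n+1))).aestronglyMeasurable) ?_
    exact Filter.Eventually.of_forall fun ω => by rw [Real.norm_eq_abs]; exact hM _
  have hc := hMarkov x n h hh ⟨M, hM⟩
  constructor
  · exact (integrable_condExp (m := natFilt X n)).congr hc
  · intro A hA
    rw [← setIntegral_condExp hm hint hA]
    exact setIntegral_congr_ae (hm A hA) (hc.mono fun ω hω _ => hω)

include hX hMarkov in
lemma markov_ext (x : E) (n : ℕ) (g : E → ℝ) (hg : Measurable g)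
    (hgi : Integrable (fun ω => g (X (n + 1) ω)) (P x)) :
    Integrable (fun ω => ∫ y, g y ∂(K (X n ω))) (P x) ∧
    ∀ A, MeasurableSet[natFilt X n] A →
      ∫ ω in A, g (X (n + 1) ω) ∂(P x) = ∫ ω in A, (∫ y, g y ∂(K (X n ω))) ∂(P x) := by
  have hm := natFilt_le X hX n
  -- the ℝ≥0∞-valued kernel norm integral
  set Φ : Ω → ENNReal := fun ω => ∫⁻ y, ‖g y‖₊ ∂(K (X n ω)) with hΦ
  have hΦmeas : Measurable Φ :=
    (Measurable.lintegral_kernel (κ := K) hg.nnnorm.coe_nnreal_ennreal).comp (hX n)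
  -- Claim A : ∫⁻ Φ ≤ ∫⁻ ‖g(X_{n+1})‖
  have claimA : ∫⁻ ω, Φ ω ∂(P x) ≤ ∫⁻ ω, ‖g (X (n + 1) ω)‖₊ ∂(P x) := by
    have hψeq : ∀ ω, Φ ω = ⨆ m : ℕ, ∫⁻ y, ENNReal.ofReal (min ‖g y‖ m) ∂(K (X n ω)) := by
      intro ω
      rw [← lintegral_iSup]
      · refine lintegral_congr fun y => ?_
        rw [← enorm_eq_nnnorm, ← ofReal_norm]
        refine le_antisymm (le_iSup_iff.mpr fun b hb => ?_) (iSup_le fun m => ?_)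
        · refine le_trans ?_ (hb ⌈‖g y‖⌉₊)
          exact ENNReal.ofReal_le_ofReal (le_min le_rfl (Nat.le_ceil _))
        · exact ENNReal.ofReal_le_ofReal (min_le_left _ _)
      · intro m
        exact ((hg.norm.min measurable_const).ennreal_ofReal)
      · intro m m' hmm ω'
        exact ENNReal.ofReal_le_ofReal (le_min (min_le_left _ _)
          ((min_le_right _ _).trans (by exact_mod_cast Nat.cast_le.mpr hmm)))
    have key : ∀ m : ℕ,
        ∫⁻ ω, (∫⁻ y, ENNReal.ofReal (min ‖g y‖ m) ∂(K (X n ω))) ∂(P x)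
          ≤ ∫⁻ ω, ‖g (X (n + 1) ω)‖₊ ∂(P x) := by
      intro m
      have hhm : Measurable fun y => min ‖g y‖ (m : ℝ) := hg.norm.min measurable_const
      have hbd : ∀ y, |min ‖g y‖ (m : ℝ)| ≤ m := fun y => by
        rw [abs_of_nonneg (le_min (norm_nonneg _) m.cast_nonneg)]
        exact min_le_right _ _
      obtain ⟨hGint, hGeq⟩ := markov_bdd K P X hX hMarkov x n _ hhm m hbd
      have h1 : ∀ ω, (∫⁻ y, ENNReal.ofReal (min ‖g y‖ m) ∂(K (X n ω)))
          = ENNReal.ofReal (∫ y, min ‖g y‖ (m : ℝ) ∂(K (X n ω))) := by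
        intro ω
        rw [ofReal_integral_eq_lintegral_ofReal]
        · refine Integrable.mono' (integrable_const (m : ℝ)) hhm.aestronglyMeasurable ?_
          exact Filter.Eventually.of_forall fun y => by
            rw [Real.norm_eq_abs]; exact hbd y
        · exact Filter.Eventually.of_forall fun y => le_min (norm_nonneg _) m.cast_nonneg
      simp_rw [h1]
      rw [← ofReal_integral_eq_lintegral_ofReal hGint (Filter.Eventually.of_forall fun ω =>
        integral_nonneg fun y => le_min (norm_nonneg _) m.cast_nonneg)]
      have h2 := hGeq Set.univ MeasurableSet.univ
      simp only [Measure.restrict_univ] at h2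
      rw [← h2]
      rw [ofReal_integral_eq_lintegral_ofReal]
      · refine lintegral_mono fun ω => ?_
        rw [← enorm_eq_nnnorm, ← ofReal_norm]
        exact ENNReal.ofReal_le_ofReal (min_le_left _ _)
      · refine Integrable.mono' (integrable_const (m : ℝ))
          ((hhm.comp (hX (n+1))).aestronglyMeasurable) ?_
        exact Filter.Eventually.of_forall fun ω => by
          rw [Real.norm_eq_abs]; exact hbd _
      · exact Filter.Eventually.of_forall fun ω => le_min (norm_nonneg _) m.cast_nonneg
    calc ∫⁻ ω, Φ ω ∂(P x)
        = ∫⁻ ω, ⨆ m : ℕ, ∫⁻ y, ENNReal.ofReal (min ‖g y‖ m) ∂(K (X n ω)) ∂(P x) := by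
          simp_rw [hψeq]
      _ = ⨆ m : ℕ, ∫⁻ ω, ∫⁻ y, ENNReal.ofReal (min ‖g y‖ m) ∂(K (X n ω)) ∂(P x) := by
          refine lintegral_iSup (fun m => ?_) (fun m m' hmm ω => ?_)
          · exact (Measurable.lintegral_kernel (κ := K)
              ((hg.norm.min measurable_const).ennreal_ofReal)).comp (hX n)
          · refine lintegral_mono fun y => ENNReal.ofReal_le_ofReal
              (le_min (min_le_left _ _) ((min_le_right _ _).trans ?_))
            exact_mod_cast Nat.cast_le.mpr hmm
      _ ≤ ∫⁻ ω, ‖g (X (n + 1) ω)‖₊ ∂(P x) := iSup_le key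

  have hfin : ∫⁻ ω, Φ ω ∂(P x) ≠ ⊤ := (claimA.trans_lt hgi.2).ne
  have hΦae : ∀ᵐ ω ∂(P x), Φ ω < ⊤ := ae_lt_top hΦmeas hfin
  have hgK : ∀ᵐ ω ∂(P x), Integrable g (K (X n ω)) :=
    hΦae.mono fun ω hω => ⟨hg.aestronglyMeasurable, hω⟩
  have hGsm : Measurable fun ω => ∫ y, g y ∂(K (X n ω)) :=
    ((MeasureTheory.StronglyMeasurable.integral_kernel_prod_right (κ := K)
      (f := fun _ y => g y) ((hg.comp measurable_snd).stronglyMeasurable)).measurable).comp (hX n)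
  have hGint : Integrable (fun ω => ∫ y, g y ∂(K (X n ω))) (P x) := by
    refine ⟨hGsm.aestronglyMeasurable, ?_⟩
    refine lt_of_le_of_lt (lintegral_mono fun ω => ?_) (lt_top_iff_ne_top.mpr hfin)
    exact enorm_integral_le_lintegral_enorm _
  have hΦr : Integrable (fun ω => (Φ ω).toReal) (P x) :=
    integrable_toReal_of_lintegral_ne_top hΦmeas.aemeasurable hfin
  refine ⟨hGint, fun A hA => ?_⟩
  have hAm : MeasurableSet A := hm A hA
  -- truncations
  set T : ℕ → ℝ → ℝ := fun m t => max (min t m) (-(m : ℝ)) with hT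
  have hTabs : ∀ (m : ℕ) (t : ℝ), |T m t| ≤ |t| := by
    intro m t
    rw [abs_le]
    constructor
    · exact le_max_of_le_left (le_min (neg_abs_le t) ((neg_nonpos.mpr (abs_nonneg t)).trans m.cast_nonneg))
    · exact max_le ((min_le_left _ _).trans (le_abs_self t))
        ((neg_nonpos.mpr m.cast_nonneg).trans (abs_nonneg t))
  have hTbd : ∀ (m : ℕ) (t : ℝ), |T m t| ≤ m := fun m t =>
    abs_le.mpr ⟨le_max_right _ _, max_le (min_le_right _ _) (neg_le_self m.cast_nonneg)⟩
  have hTtend : ∀ t : ℝ, Tendsto (fun m : ℕ => T m t) atTop (nhds t) := by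
    intro t
    refine tendsto_const_nhds.congr' ?_
    filter_upwards [eventually_ge_atTop ⌈|t|⌉₊] with m hm
    have h1 : |t| ≤ (m : ℝ) := (Nat.le_ceil _).trans (Nat.cast_le.mpr hm)
    rw [hT]
    simp only
    rw [min_eq_left ((le_abs_self t).trans h1),
      max_eq_left ((neg_le_neg h1).trans (neg_abs_le t))]
  have hTmeas : ∀ m, Measurable fun y => T m (g y) := fun m =>
    (hg.min measurable_const).max measurable_const
  have key : ∀ m : ℕ,
      ∫ ω in A, T m (g (X (n + 1) ω)) ∂(P x)
        = ∫ ω in A, (∫ y, T m (g y) ∂(K (X n ω))) ∂(P x) :=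
    fun m => (markov_bdd K P X hX hMarkov x n _ (hTmeas m) m
      (fun y => hTbd m (g y))).2 A hA
  have hL : Tendsto (fun m => ∫ ω in A, T m (g (X (n + 1) ω)) ∂(P x)) atTop
      (nhds (∫ ω in A, g (X (n + 1) ω) ∂(P x))) := by
    refine tendsto_integral_of_dominated_convergence (fun ω => ‖g (X (n + 1) ω)‖)
      (fun m => ((hTmeas m).comp (hX (n + 1))).aestronglyMeasurable.restrict)
      hgi.norm.restrict (fun m => Filter.Eventually.of_forall fun ω => ?_)
      (Filter.Eventually.of_forall fun ω => hTtend _)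
    exact ((hTabs m _).trans_eq (Real.norm_eq_abs _).symm).trans_eq' (Real.norm_eq_abs _)
  have hR : Tendsto (fun m => ∫ ω in A, (∫ y, T m (g y) ∂(K (X n ω))) ∂(P x)) atTop
      (nhds (∫ ω in A, (∫ y, g y ∂(K (X n ω))) ∂(P x))) := by
    have hmeasm : ∀ m, Measurable fun ω => ∫ y, T m (g y) ∂(K (X n ω)) := fun m =>
      ((MeasureTheory.StronglyMeasurable.integral_kernel_prod_right (κ := K)
        (f := fun _ y => T m (g y))
        (((hTmeas m).comp measurable_snd).stronglyMeasurable)).measurable).comp (hX n)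
    refine tendsto_integral_of_dominated_convergence (fun ω => (Φ ω).toReal)
      (fun m => (hmeasm m).aestronglyMeasurable.restrict) hΦr.restrict
      (fun m => ae_restrict_of_ae (hgK.mono fun ω hω => ?_))
      (ae_restrict_of_ae (hgK.mono fun ω hω => ?_))
    · have h1 : ∫ y, ‖g y‖ ∂(K (X n ω)) = (Φ ω).toReal := by
        rw [hΦ]
        exact integral_norm_eq_lintegral_enorm hg.aestronglyMeasurable
      refine le_trans ((norm_integral_le_integral_norm _).trans ?_) h1.le
      refine integral_mono ?_ hω.norm fun y => ?_
      · refine Integrable.mono' (integrable_const (m : ℝ)) (hTmeas m).norm.aestronglyMeasurable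
          (Filter.Eventually.of_forall fun y => ?_)
        rw [norm_norm, Real.norm_eq_abs]
        exact hTbd m _
      · rw [Real.norm_eq_abs, Real.norm_eq_abs]
        exact hTabs m _
    · exact tendsto_integral_of_dominated_convergence (fun y => ‖g y‖)
        (fun m => (hTmeas m).aestronglyMeasurable) hω.norm
        (fun m => Filter.Eventually.of_forall fun y =>
          ((hTabs m _).trans_eq (Real.norm_eq_abs _).symm).trans_eq' (Real.norm_eq_abs _))
        (Filter.Eventually.of_forall fun y => hTtend _)
  exact tendsto_nhds_unique (hL.congr key) hR



include hX hMarkov in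
lemma gameValue_integrable {p : ℕ} (f : Fin p → E → ℝ) (hf : ∀ i, Measurable (f i))
    (hfint : ∀ (i : Fin p) (n : ℕ) (x : E), Integrable (fun ω => f i (X n ω)) (P x))
    (π : (Fin p → Bool) → Bool) :
    ∀ (k : ℕ) (i : Fin p) (n : ℕ) (x : E),
      Integrable (fun ω => gameValue K f π k i (X n ω)) (P x) := by
  intro k
  induction k with
  | zero => exact hfint
  | succ k ih =>
    intro i n x
    have hbint : Integrable (fun ω => brak K f π k i (X (n + 1) ω)) (P x) := by
      refine Integrable.mono'
        (((hfint i (n+1) x).abs.const_mul 2).add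
          ((ih i (n+1) x).abs.const_mul 3))
        (((brak_measurable K f hf π
          (fun j => gameValue_measurable K f hf π k j) i).comp (hX (n+1))).aestronglyMeasurable)
        (Filter.Eventually.of_forall fun ω => ?_)
      rw [Real.norm_eq_abs]
      exact brak_abs_le K f π k i (X (n + 1) ω)
    have h := (markov_ext K P X hX hMarkov x n _
      (brak_measurable K f hf π (fun j => gameValue_measurable K f hf π k j) i) hbint).1
    refine h.congr (Filter.Eventually.of_forall fun ω => ?_)
    exact (gameValue_succ K f π k i (X n ω)).symm

include hX hMarkov in
lemma brak_integrable {p : ℕ} (f : Fin p → E → ℝ) (hf : ∀ i, Measurable (f i))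
    (hfint : ∀ (i : Fin p) (n : ℕ) (x : E), Integrable (fun ω => f i (X n ω)) (P x))
    (π : (Fin p → Bool) → Bool) (k : ℕ) (i : Fin p) (n : ℕ) (x : E) :
    Integrable (fun ω => brak K f π k i (X n ω)) (P x) := by
  refine Integrable.mono'
    (((hfint i n x).abs.const_mul 2).add
      ((gameValue_integrable K P X hX hMarkov f hf hfint π k i n x).abs.const_mul 3))
    (((brak_measurable K f hf π
      (fun j => gameValue_measurable K f hf π k j) i).comp (hX n)).aestronglyMeasurable)
    (Filter.Eventually.of_forall fun ω => ?_)
  rw [Real.norm_eq_abs]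
  exact brak_abs_le K f π k i (X n ω)

include hX hMarkov in
lemma main_le (N : ℕ) {p : ℕ} (f : Fin p → E → ℝ) (hf : ∀ i, Measurable (f i))
    (hfint : ∀ (i : Fin p) (n : ℕ) (x : E), Integrable (fun ω => f i (X n ω)) (P x))
    (π : (Fin p → Bool) → Bool)
    (hπmono : ∀ a b : Fin p → Bool, (∀ j, a j ≤ b j) → π a ≤ π b)
    (hπone : π (fun _ => true) = true)
    (i : Fin p) (s : Fin p → ℕ → Ω → Bool)
    (hs_meas : ∀ j n, 1 ≤ n → n ≤ N → Measurable[natFilt X n] (s j n))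
    (hsN : ∀ j ω, s j N ω = true)
    (hs_other : ∀ j, j ≠ i → ∀ n ω, 1 ≤ n → n ≤ N →
      s j n ω = decide (0 ≤ f j (X n ω) - gameValue K f π (N - n) j (X n ω)))
    (x : E) :
    ∀ m n, m + n = N → 1 ≤ n →
      Integrable (fun ω => f i (X (tA π N s n ω) ω)) (P x) ∧
      ∀ A, MeasurableSet[natFilt X (n - 1)] A →
        ∫ ω in A, f i (X (tA π N s n ω) ω) ∂(P x)
          ≤ ∫ ω in A, gameValue K f π (m + 1) i (X (n - 1) ω) ∂(P x) := by
  have hsNπ : ∀ ω, π (fun j => s j N ω) = true := fun ω => by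
    have h : (fun j => s j N ω) = fun _ => true := funext fun j => hsN j ω
    rw [h]; exact hπone
  intro m
  induction m with
  | zero =>
    intro n hmn h1n
    have hnN : n = N := by omega
    subst hnN
    have h1N : 1 ≤ n := h1n
    have htA : ∀ ω, tA π n s n ω = n := fun ω => tA_N π n s ω (hsNπ ω)
    have heq : (fun ω => f i (X (tA π n s n ω) ω)) = fun ω => f i (X n ω) :=
      funext fun ω => by rw [htA ω]
    constructor
    · rw [heq]; exact hfint i n x
    · intro A hA
      have hn1 : n - 1 + 1 = n := Nat.succ_pred_eq_of_pos h1n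
      obtain ⟨hGint, hGeq⟩ := markov_ext K P X hX hMarkov x (n - 1) (f i) (hf i)
        (by rw [hn1]; exact hfint i n x)
      have h2 := hGeq A hA
      rw [hn1] at h2
      refine le_of_eq ?_
      calc ∫ ω in A, f i (X (tA π n s n ω) ω) ∂(P x)
          = ∫ ω in A, f i (X n ω) ∂(P x) := by rw [heq]
        _ = ∫ ω in A, (∫ y, f i y ∂(K (X (n - 1) ω))) ∂(P x) := h2
        _ = ∫ ω in A, gameValue K f π (0 + 1) i (X (n - 1) ω) ∂(P x) := by
            refine setIntegral_congr_fun (natFilt_le X hX (n-1) A hA) fun ω _ => ?_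
            rw [Nat.zero_add, gameValue_one]
  | succ m ih =>
    intro n hmn h1n
    have hnN : n ≤ N := by omega
    have hNn : N - n = m + 1 := by omega
    obtain ⟨hY1int, hY1⟩ := ih (n + 1) (by omega) (by omega)
    simp only [Nat.add_sub_cancel] at hY1
    set b : Ω → Bool := fun ω => π (fun j => s j n ω) with hbdef
    have hbFn : Measurable[natFilt X n] b :=
      @meas_pi_bool' Ω (natFilt X n) p (fun ω j => s j n ω)
        (fun j => hs_meas j n h1n hnN) π
    set B := {ω | b ω = true} with hBdef
    have hBFn : MeasurableSet[natFilt X n] B := hbFn (MeasurableSet.singleton true)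
    have hBm : MeasurableSet B := natFilt_le X hX n B hBFn
    have hdec : ∀ ω, tA π N s n ω = if b ω = true then n else tA π N s (n + 1) ω :=
      fun ω => tA_step π N s ω n hnN (hsNπ ω)
    have hYdec : ∀ ω, f i (X (tA π N s n ω) ω) =
        if b ω = true then f i (X n ω) else f i (X (tA π N s (n + 1) ω) ω) := fun ω => by
      rw [hdec ω]; by_cases hc : b ω = true <;> simp [hc]
    have hYint : Integrable (fun ω => f i (X (tA π N s n ω) ω)) (P x) := by
      have hsum : (fun ω => f i (X (tA π N s n ω) ω)) = fun ω =>
          B.indicator (fun ω' => f i (X n ω')) ω +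
            Bᶜ.indicator (fun ω' => f i (X (tA π N s (n + 1) ω') ω')) ω := by
        funext ω
        by_cases hc : b ω = true <;>
          simp [hYdec ω, hc, Set.indicator_apply, hBdef, Set.mem_setOf_eq]
      rw [hsum]
      exact ((hfint i n x).indicator hBm).add (hY1int.indicator hBm.compl)
    refine ⟨hYint, fun A hA => ?_⟩
    have hAn : MeasurableSet[natFilt X n] A := natFilt_mono X (Nat.sub_le n 1) A hA
    have hAm : MeasurableSet A := natFilt_le X hX n A hAn
    have hsplit : ∀ (g : Ω → ℝ), Integrable g (P x) →
        ∫ ω in A, g ω ∂(P x)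
          = ∫ ω in B ∩ A, g ω ∂(P x) + ∫ ω in Bᶜ ∩ A, g ω ∂(P x) := fun g hg => by
      rw [← integral_add_compl hBm (hg.restrict (s := A)),
        Measure.restrict_restrict hBm, Measure.restrict_restrict hBm.compl]
    -- the recombined integrand
    set W : Ω → ℝ := fun ω =>
      if b ω = true then f i (X n ω) else gameValue K f π (m + 1) i (X n ω) with hWdef
    have hWint : Integrable W (P x) := by
      have hsum : W = fun ω =>
          B.indicator (fun ω' => f i (X n ω')) ω +
            Bᶜ.indicator (fun ω' => gameValue K f π (m + 1) i (X n ω')) ω := by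
        funext ω
        by_cases hc : b ω = true <;>
          simp [hWdef, hc, Set.indicator_apply, hBdef, Set.mem_setOf_eq]
      rw [hsum]
      exact ((hfint i n x).indicator hBm).add
        ((gameValue_integrable K P X hX hMarkov f hf hfint π (m + 1) i n x).indicator
          hBm.compl)
    -- comparison on the two pieces
    have hp1 : ∫ ω in B ∩ A, f i (X (tA π N s n ω) ω) ∂(P x)
        = ∫ ω in B ∩ A, W ω ∂(P x) := by
      refine setIntegral_congr_fun (hBm.inter hAm) fun ω hω => ?_
      have hb : b ω = true := hω.1
      rw [hYdec ω, hWdef]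
      simp only [if_pos hb]
    have hp2 : ∫ ω in Bᶜ ∩ A, f i (X (tA π N s n ω) ω) ∂(P x)
        = ∫ ω in Bᶜ ∩ A, f i (X (tA π N s (n + 1) ω) ω) ∂(P x) := by
      refine setIntegral_congr_fun (hBm.compl.inter hAm) fun ω hω => ?_
      rw [hYdec ω]
      exact if_neg hω.1
    have hp2W : ∫ ω in Bᶜ ∩ A, W ω ∂(P x)
        = ∫ ω in Bᶜ ∩ A, gameValue K f π (m + 1) i (X n ω) ∂(P x) := by
      refine setIntegral_congr_fun (hBm.compl.inter hAm) fun ω hω => ?_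
      rw [hWdef]
      exact if_neg hω.1
    have hp3 := hY1 (Bᶜ ∩ A) (hBFn.compl.inter hAn)
    -- pointwise comparison of W with the one-step integrand
    have hWle : ∀ ω, W ω ≤ brak K f π (m + 1) i (X n ω) := by
      intro ω
      have hlw : π (Function.update
          (fun j => decide (0 ≤ f j (X n ω) - gameValue K f π (m + 1) j (X n ω))) i false)
            ≤ b ω := by
        refine hπmono _ _ fun j => ?_
        by_cases hj : j = i
        · subst hj; rw [Function.update_self]; exact Bool.false_le _
        · rw [Function.update_of_ne hj, hs_other j hj n ω h1n hnN, hNn]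
      have hub : b ω ≤ π (Function.update
          (fun j => decide (0 ≤ f j (X n ω) - gameValue K f π (m + 1) j (X n ω))) i true) := by
        refine hπmono _ _ fun j => ?_
        by_cases hj : j = i
        · subst hj; rw [Function.update_self]; exact Bool.le_true _
        · rw [Function.update_of_ne hj, hs_other j hj n ω h1n hnN, hNn]
      have h := pointwise_le π i
        (fun j => decide (0 ≤ f j (X n ω) - gameValue K f π (m + 1) j (X n ω)))
        (b ω) (f i (X n ω)) (gameValue K f π (m + 1) i (X n ω)) hlw hub
      exact h
    have hbrakint := brak_integrable K P X hX hMarkov f hf hfint π (m + 1) i n x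
    have hWbrak : ∫ ω in A, W ω ∂(P x) ≤ ∫ ω in A, brak K f π (m + 1) i (X n ω) ∂(P x) :=
      integral_mono hWint.restrict hbrakint.restrict hWle
    -- the Markov step
    have hn1 : n - 1 + 1 = n := Nat.succ_pred_eq_of_pos h1n
    have hmark := (markov_ext K P X hX hMarkov x (n - 1) (brak K f π (m + 1) i)
      (brak_measurable K f hf π (fun j => gameValue_measurable K f hf π (m + 1) j) i)
      (by rw [hn1]; exact hbrakint)).2 A hA
    rw [hn1] at hmark
    calc ∫ ω in A, f i (X (tA π N s n ω) ω) ∂(P x)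
        = ∫ ω in B ∩ A, f i (X (tA π N s n ω) ω) ∂(P x)
            + ∫ ω in Bᶜ ∩ A, f i (X (tA π N s n ω) ω) ∂(P x) := hsplit _ hYint
      _ ≤ ∫ ω in B ∩ A, W ω ∂(P x) + ∫ ω in Bᶜ ∩ A, W ω ∂(P x) := by
          rw [hp1, hp2, hp2W]
          gcongr
      _ = ∫ ω in A, W ω ∂(P x) := (hsplit _ hWint).symm
      _ ≤ ∫ ω in A, brak K f π (m + 1) i (X n ω) ∂(P x) := hWbrak
      _ = ∫ ω in A, (∫ y, brak K f π (m + 1) i y ∂(K (X (n - 1) ω))) ∂(P x) := hmark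
      _ = ∫ ω in A, gameValue K f π (m + 1 + 1) i (X (n - 1) ω) ∂(P x) := by
          refine setIntegral_congr_fun (natFilt_le X hX (n-1) A hA) fun ω _ => ?_
          rw [gameValue_succ]

include hX hMarkov in
lemma main_eq (N : ℕ) {p : ℕ} (f : Fin p → E → ℝ) (hf : ∀ i, Measurable (f i))
    (hfint : ∀ (i : Fin p) (n : ℕ) (x : E), Integrable (fun ω => f i (X n ω)) (P x))
    (π : (Fin p → Bool) → Bool)
    (hπone : π (fun _ => true) = true)
    (i : Fin p) (s : Fin p → ℕ → Ω → Bool)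
    (hs_meas : ∀ j n, 1 ≤ n → n ≤ N → Measurable[natFilt X n] (s j n))
    (hsN : ∀ j ω, s j N ω = true)
    (hs_all : ∀ j n ω, 1 ≤ n → n ≤ N →
      s j n ω = decide (0 ≤ f j (X n ω) - gameValue K f π (N - n) j (X n ω)))
    (x : E) :
    ∀ m n, m + n = N → 1 ≤ n →
      Integrable (fun ω => f i (X (tA π N s n ω) ω)) (P x) ∧
      ∀ A, MeasurableSet[natFilt X (n - 1)] A →
        ∫ ω in A, f i (X (tA π N s n ω) ω) ∂(P x)
          = ∫ ω in A, gameValue K f π (m + 1) i (X (n - 1) ω) ∂(P x) := by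
  have hsNπ : ∀ ω, π (fun j => s j N ω) = true := fun ω => by
    have h : (fun j => s j N ω) = fun _ => true := funext fun j => hsN j ω
    rw [h]; exact hπone
  intro m
  induction m with
  | zero =>
    intro n hmn h1n
    have hnN : n = N := by omega
    subst hnN
    have htA : ∀ ω, tA π n s n ω = n := fun ω => tA_N π n s ω (hsNπ ω)
    have heq : (fun ω => f i (X (tA π n s n ω) ω)) = fun ω => f i (X n ω) :=
      funext fun ω => by rw [htA ω]
    constructor
    · rw [heq]; exact hfint i n x
    · intro A hA
      have hn1 : n - 1 + 1 = n := Nat.succ_pred_eq_of_pos h1n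
      obtain ⟨hGint, hGeq⟩ := markov_ext K P X hX hMarkov x (n - 1) (f i) (hf i)
        (by rw [hn1]; exact hfint i n x)
      have h2 := hGeq A hA
      rw [hn1] at h2
      calc ∫ ω in A, f i (X (tA π n s n ω) ω) ∂(P x)
          = ∫ ω in A, f i (X n ω) ∂(P x) := by rw [heq]
        _ = ∫ ω in A, (∫ y, f i y ∂(K (X (n - 1) ω))) ∂(P x) := h2
        _ = ∫ ω in A, gameValue K f π (0 + 1) i (X (n - 1) ω) ∂(P x) := by
            refine setIntegral_congr_fun (natFilt_le X hX (n-1) A hA) fun ω _ => ?_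
            rw [Nat.zero_add, gameValue_one]
  | succ m ih =>
    intro n hmn h1n
    have hnN : n ≤ N := by omega
    have hNn : N - n = m + 1 := by omega
    obtain ⟨hY1int, hY1⟩ := ih (n + 1) (by omega) (by omega)
    simp only [Nat.add_sub_cancel] at hY1
    set b : Ω → Bool := fun ω => π (fun j => s j n ω) with hbdef
    have hbFn : Measurable[natFilt X n] b :=
      @meas_pi_bool' Ω (natFilt X n) p (fun ω j => s j n ω)
        (fun j => hs_meas j n h1n hnN) π
    set B := {ω | b ω = true} with hBdef
    have hBFn : MeasurableSet[natFilt X n] B := hbFn (MeasurableSet.singleton true)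
    have hBm : MeasurableSet B := natFilt_le X hX n B hBFn
    have hdec : ∀ ω, tA π N s n ω = if b ω = true then n else tA π N s (n + 1) ω :=
      fun ω => tA_step π N s ω n hnN (hsNπ ω)
    have hYdec : ∀ ω, f i (X (tA π N s n ω) ω) =
        if b ω = true then f i (X n ω) else f i (X (tA π N s (n + 1) ω) ω) := fun ω => by
      rw [hdec ω]; by_cases hc : b ω = true <;> simp [hc]
    have hYint : Integrable (fun ω => f i (X (tA π N s n ω) ω)) (P x) := by
      have hsum : (fun ω => f i (X (tA π N s n ω) ω)) = fun ω =>
          B.indicator (fun ω' => f i (X n ω')) ω +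
            Bᶜ.indicator (fun ω' => f i (X (tA π N s (n + 1) ω') ω')) ω := by
        funext ω
        by_cases hc : b ω = true <;>
          simp [hYdec ω, hc, Set.indicator_apply, hBdef, Set.mem_setOf_eq]
      rw [hsum]
      exact ((hfint i n x).indicator hBm).add (hY1int.indicator hBm.compl)
    refine ⟨hYint, fun A hA => ?_⟩
    have hAn : MeasurableSet[natFilt X n] A := natFilt_mono X (Nat.sub_le n 1) A hA
    have hAm : MeasurableSet A := natFilt_le X hX n A hAn
    have hsplit : ∀ (g : Ω → ℝ), Integrable g (P x) →
        ∫ ω in A, g ω ∂(P x)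
          = ∫ ω in B ∩ A, g ω ∂(P x) + ∫ ω in Bᶜ ∩ A, g ω ∂(P x) := fun g hg => by
      rw [← integral_add_compl hBm (hg.restrict (s := A)),
        Measure.restrict_restrict hBm, Measure.restrict_restrict hBm.compl]
    set W : Ω → ℝ := fun ω =>
      if b ω = true then f i (X n ω) else gameValue K f π (m + 1) i (X n ω) with hWdef
    have hWint : Integrable W (P x) := by
      have hsum : W = fun ω =>
          B.indicator (fun ω' => f i (X n ω')) ω +
            Bᶜ.indicator (fun ω' => gameValue K f π (m + 1) i (X n ω')) ω := by
        funext ω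
        by_cases hc : b ω = true <;>
          simp [hWdef, hc, Set.indicator_apply, hBdef, Set.mem_setOf_eq]
      rw [hsum]
      exact ((hfint i n x).indicator hBm).add
        ((gameValue_integrable K P X hX hMarkov f hf hfint π (m + 1) i n x).indicator
          hBm.compl)
    have hp1 : ∫ ω in B ∩ A, f i (X (tA π N s n ω) ω) ∂(P x)
        = ∫ ω in B ∩ A, W ω ∂(P x) := by
      refine setIntegral_congr_fun (hBm.inter hAm) fun ω hω => ?_
      have hb : b ω = true := hω.1
      rw [hYdec ω, hWdef]
      simp only [if_pos hb]
    have hp2 : ∫ ω in Bᶜ ∩ A, f i (X (tA π N s n ω) ω) ∂(P x)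
        = ∫ ω in Bᶜ ∩ A, f i (X (tA π N s (n + 1) ω) ω) ∂(P x) := by
      refine setIntegral_congr_fun (hBm.compl.inter hAm) fun ω hω => ?_
      rw [hYdec ω]
      exact if_neg hω.1
    have hp2W : ∫ ω in Bᶜ ∩ A, W ω ∂(P x)
        = ∫ ω in Bᶜ ∩ A, gameValue K f π (m + 1) i (X n ω) ∂(P x) := by
      refine setIntegral_congr_fun (hBm.compl.inter hAm) fun ω hω => ?_
      rw [hWdef]
      exact if_neg hω.1
    have hp3 := hY1 (Bᶜ ∩ A) (hBFn.compl.inter hAn)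
    -- pointwise identity between W and the one-step integrand
    have hWeq : ∀ ω, W ω = brak K f π (m + 1) i (X n ω) := by
      intro ω
      have hveq : (fun j => s j n ω)
          = fun j => decide (0 ≤ f j (X n ω) - gameValue K f π (m + 1) j (X n ω)) :=
        funext fun j => by rw [hs_all j n ω h1n hnN, hNn]
      have hbc : b ω = π (fun j =>
          decide (0 ≤ f j (X n ω) - gameValue K f π (m + 1) j (X n ω))) :=
        congrArg π hveq
      rw [hWdef]
      simp only
      rw [hbc]
      exact pointwise_eq π i _ (f i (X n ω)) (gameValue K f π (m + 1) i (X n ω)) rfl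
    have hbrakint := brak_integrable K P X hX hMarkov f hf hfint π (m + 1) i n x
    have hWbrak : ∫ ω in A, W ω ∂(P x) = ∫ ω in A, brak K f π (m + 1) i (X n ω) ∂(P x) :=
      integral_congr_ae (Filter.Eventually.of_forall fun ω => hWeq ω)
    have hn1 : n - 1 + 1 = n := Nat.succ_pred_eq_of_pos h1n
    have hmark := (markov_ext K P X hX hMarkov x (n - 1) (brak K f π (m + 1) i)
      (brak_measurable K f hf π (fun j => gameValue_measurable K f hf π (m + 1) j) i)
      (by rw [hn1]; exact hbrakint)).2 A hA
    rw [hn1] at hmark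
    calc ∫ ω in A, f i (X (tA π N s n ω) ω) ∂(P x)
        = ∫ ω in B ∩ A, f i (X (tA π N s n ω) ω) ∂(P x)
            + ∫ ω in Bᶜ ∩ A, f i (X (tA π N s n ω) ω) ∂(P x) := hsplit _ hYint
      _ = ∫ ω in B ∩ A, W ω ∂(P x) + ∫ ω in Bᶜ ∩ A, W ω ∂(P x) := by
          rw [hp1, hp2, hp2W, hp3]
      _ = ∫ ω in A, W ω ∂(P x) := (hsplit _ hWint).symm
      _ = ∫ ω in A, brak K f π (m + 1) i (X n ω) ∂(P x) := hWbrak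
      _ = ∫ ω in A, (∫ y, brak K f π (m + 1) i y ∂(K (X (n - 1) ω))) ∂(P x) := hmark
      _ = ∫ ω in A, gameValue K f π (m + 1 + 1) i (X (n - 1) ω) ∂(P x) := by
          refine setIntegral_congr_fun (natFilt_le X hX (n-1) A hA) fun ω _ => ?_
          rw [gameValue_succ]

end Markov

/-- In the finite-horizon multilateral stopping game of a homogeneous
Markov chain with transition kernel `K`, monotone aggregate function `π` with
`π(1,…,1) = 1`, and integrable utilities `f_i`, the strategy `σ*` in which player `i`
declares to stop at time `n` exactly when `X_n ∈ C*_n{}^i = {x : f_i(x) - v_{i,N-n}(x) ≥ 0}`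
is an equilibrium with respect to `π`, and its payoff is `E_x f_i(X_{t_π(σ*)}) = v_{i,N}(x)`. -/
theorem finite_horizon_equilibrium {E Ω : Type*} [MeasurableSpace E] [MeasurableSpace Ω]
    (K : Kernel E E) [IsMarkovKernel K]
    (P : E → Measure Ω) [∀ x, IsProbabilityMeasure (P x)]
    (X : ℕ → Ω → E) (hX : ∀ n, Measurable (X n))
    (N : ℕ) (hN : 1 ≤ N) (p : ℕ)
    (f : Fin p → E → ℝ) (hf : ∀ i, Measurable (f i))
    (hfint : ∀ (i : Fin p) (n : ℕ) (x : E), Integrable (fun ω => f i (X n ω)) (P x))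
    (π : (Fin p → Bool) → Bool)
    (hπmono : ∀ a b : Fin p → Bool, (∀ j, a j ≤ b j) → π a ≤ π b)
    (hπone : π (fun _ => true) = true)
    (hX0 : ∀ x : E, ∀ᵐ ω ∂(P x), X 0 ω = x)
    (hMarkov : ∀ (x : E) (n : ℕ) (h : E → ℝ), Measurable h → (∃ M, ∀ y, |h y| ≤ M) →
      (P x)[fun ω => h (X (n + 1) ω) | natFilt X n] =ᵐ[P x]
        fun ω => ∫ y, h y ∂(K (X n ω))) :
    -- the equilibrium strategy: stop iff `f_i(X_n) - v_{i,N-n}(X_n) ≥ 0`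
    (∀ i : Fin p, IsISS X N
        (fun n ω => decide (0 ≤ f i (X n ω) - gameValue K f π (N - n) i (X n ω)))) ∧
    -- no player can improve by a unilateral deviation
    (∀ (i : Fin p) (τ : ℕ → Ω → Bool), IsISS X N τ → ∀ x : E,
      ∫ ω, f i (X (stopT π N (Function.update
          (fun i' n ω' => decide (0 ≤ f i' (X n ω') - gameValue K f π (N - n) i' (X n ω')))
          i τ) ω) ω) ∂(P x) ≤
        ∫ ω, f i (X (stopT π N
          (fun i' n ω' => decide (0 ≤ f i' (X n ω') - gameValue K f π (N - n) i' (X n ω')))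
          ω) ω) ∂(P x)) ∧
    -- the equilibrium payoff is `v_{i,N}`
    (∀ (i : Fin p) (x : E),
      ∫ ω, f i (X (stopT π N
          (fun i' n ω' => decide (0 ≤ f i' (X n ω') - gameValue K f π (N - n) i' (X n ω')))
          ω) ω) ∂(P x) = gameValue K f π N i x) := by
  set σs : Fin p → ℕ → Ω → Bool :=
    fun i' n ω' => decide (0 ≤ f i' (X n ω') - gameValue K f π (N - n) i' (X n ω')) with hσs
  have hσsN : ∀ j ω, σs j N ω = true := by
    intro j ω
    have h0 : f j (X N ω) - gameValue K f π (N - N) j (X N ω) = 0 := by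
      rw [Nat.sub_self]
      show f j (X N ω) - gameValue K f π 0 j (X N ω) = 0
      simp [gameValue]
    rw [hσs]
    simp only [h0]
    simp
  have hσsmeas : ∀ j n, 1 ≤ n → n ≤ N → Measurable[natFilt X n] (σs j n) := by
    intro j n _ _
    exact (meas_decide' ((hf j).sub (gameValue_measurable K f hf π (N - n) j))).comp
      (measurable_X_natFilt X le_rfl)
  -- the equilibrium payoff
  have hval : ∀ (i : Fin p) (x : E),
      ∫ ω, f i (X (stopT π N σs ω) ω) ∂(P x) = gameValue K f π N i x := by
    intro i x
    have h := (main_eq K P X hX hMarkov N f hf hfint π hπone i σs hσsmeas hσsN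
      (fun j n ω _ _ => rfl) x (N - 1) 1 (by omega) le_rfl).2 Set.univ MeasurableSet.univ
    have hN1 : N - 1 + 1 = N := Nat.succ_pred_eq_of_pos hN
    rw [hN1] at h
    simp only [Measure.restrict_univ, Nat.sub_self] at h
    have hstopT : (fun ω => f i (X (stopT π N σs ω) ω))
        = fun ω => f i (X (tA π N σs 1 ω) ω) := rfl
    rw [hstopT, h]
    have hc : ∀ᵐ ω ∂(P x), gameValue K f π N i (X 0 ω) = gameValue K f π N i x :=
      (hX0 x).mono fun ω hω => by rw [hω]
    rw [integral_congr_ae hc, integral_const]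
    simp
  refine ⟨fun i => ⟨hσsmeas i, hσsN i⟩, fun i τ hτ x => ?_, hval⟩
  -- the deviation bound
  set s' : Fin p → ℕ → Ω → Bool := Function.update σs i τ with hs'
  have hs'meas : ∀ j n, 1 ≤ n → n ≤ N → Measurable[natFilt X n] (s' j n) := by
    intro j n h1 h2
    by_cases hj : j = i
    · subst hj; rw [hs', Function.update_self]; exact hτ.1 n h1 h2
    · rw [hs', Function.update_of_ne hj]; exact hσsmeas j n h1 h2
  have hs'N : ∀ j ω, s' j N ω = true := by
    intro j ω
    by_cases hj : j = i
    · subst hj; rw [hs', Function.update_self]; exact hτ.2 ω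
    · rw [hs', Function.update_of_ne hj]; exact hσsN j ω
  have hs'other : ∀ j, j ≠ i → ∀ n ω, 1 ≤ n → n ≤ N →
      s' j n ω = decide (0 ≤ f j (X n ω) - gameValue K f π (N - n) j (X n ω)) := by
    intro j hj n ω _ _
    rw [hs', Function.update_of_ne hj]
  have h := (main_le K P X hX hMarkov N f hf hfint π hπmono hπone i s' hs'meas hs'N
    hs'other x (N - 1) 1 (by omega) le_rfl).2 Set.univ MeasurableSet.univ
  have hN1 : N - 1 + 1 = N := Nat.succ_pred_eq_of_pos hN
  rw [hN1] at h
  simp only [Measure.restrict_univ, Nat.sub_self] at h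
  have hstopT : (fun ω => f i (X (stopT π N s' ω) ω))
      = fun ω => f i (X (tA π N s' 1 ω) ω) := rfl
  have hgoal : ∫ ω, f i (X (stopT π N s' ω) ω) ∂(P x)
      ≤ gameValue K f π N i x := by
    rw [hstopT]
    refine h.trans (le_of_eq ?_)
    have hc : ∀ᵐ ω ∂(P x), gameValue K f π N i (X 0 ω) = gameValue K f π N i x :=
      (hX0 x).mono fun ω hω => by rw [hω]
    rw [integral_congr_ae hc, integral_const]
    simp
  calc ∫ ω, f i (X (stopT π N s' ω) ω) ∂(P x)
      ≤ gameValue K f π N i x := hgoal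
    _ = ∫ ω, f i (X (stopT π N σs ω) ω) ∂(P x) := (hval i x).symm


end
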